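/- Suppose f ∈ C²(ℝ^d) with ‖∇²f(x)‖ ≤ M for all x, and 0 < α < 1/M. Let x* = 0 be a strict saddle point of f with f(0) = 0 and all eigenvalues of ∇²f(0) nonzero. Let U₁ be a neighborhood of 0 and σ > 0 be such that ‖∇f(x)‖ ≥ σ‖x‖ for all x ∈ U₁, let ρ ∈ (0,1) satisfy ρM + Mρ²/2 < (ασ²/(2d))(1−ρ)², set U₂ := ⋃_{x : f(x)=0} B(x, ρ‖x‖) (open Euclidean balls) and S := U₁ ∩ U₂ ∩ f⁻¹([0,∞)). Then the set Θ₂ := {(x₀, ω) ∈ Θ : x_t(ω) ∈ S for only finitely many t} satisfies μ(Θ \ Θ₂) = 0. -/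

import Mathlib

open MeasureTheory Filter Topology InnerProductSpace Set

noncomputable section

/-- Iterates of randomized coordinate gradient descent with step size `α`:
`x_{t+1} = x_t - α e_{i_t} ∂_{i_t} f(x_t)`. -/
def rcgdIter (d : ℕ) (f : EuclideanSpace ℝ (Fin d) → ℝ) (α : ℝ)
    (x₀ : EuclideanSpace ℝ (Fin d)) (ω : ℕ → Fin d) : ℕ → EuclideanSpace ℝ (Fin d)
  | 0 => x₀
  | t + 1 =>
      rcgdIter d f α x₀ ω t -
        (α * gradient f (rcgdIter d f α x₀ ω t) (ω t)) • EuclideanSpace.single (ω t) (1 : ℝ)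

/-- The Hessian `∇²f(x)` of `f` at `x`, as a continuous linear map. -/
def hess (d : ℕ) (f : EuclideanSpace ℝ (Fin d) → ℝ) (x : EuclideanSpace ℝ (Fin d)) :
    EuclideanSpace ℝ (Fin d) →L[ℝ] EuclideanSpace ℝ (Fin d) :=
  fderiv ℝ (gradient f) x

set_option maxHeartbeats 1000000 in
theorem taylor_upper {E : Type*} [NormedAddCommGroup E] [InnerProductSpace ℝ E]
    [CompleteSpace E] {f : E → ℝ} {F : E → E} {M : ℝ} (hM0 : 0 ≤ M)
    (hdiff : Differentiable ℝ f)
    (hF : ∀ y v, inner (𝕜 := ℝ) (F y) v = fderiv ℝ f y v)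
    (hLip : ∀ x y, ‖F x - F y‖ ≤ M * ‖x - y‖) (x v : E) :
    f (x + v) ≤ f x + inner (𝕜 := ℝ) (F x) v + M / 2 * ‖v‖ ^ 2 := by
  have hFc : Continuous F := by
    have : LipschitzWith ⟨M, hM0⟩ F :=
      LipschitzWith.of_dist_le_mul fun a b => by rw [dist_eq_norm, dist_eq_norm]; exact hLip a b
    exact this.continuous
  set φ : ℝ → ℝ := fun t => inner (𝕜 := ℝ) (F (x + t • v)) v with hφ
  have hφc : Continuous φ := ((hFc.comp (by continuity)).inner continuous_const)
  have hg : ∀ t : ℝ, HasDerivAt (fun t : ℝ => f (x + t • v)) (φ t) t := by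
    intro t
    have hline : HasDerivAt (fun t : ℝ => x + t • v) v t := by
      simpa using ((hasDerivAt_id t).smul_const v).const_add x
    have := (hdiff (x + t • v)).hasFDerivAt.comp_hasDerivAt t hline
    rw [hφ]; simp only [hF]; exact this
  have hFTC : f (x + v) - f x = ∫ t in (0:ℝ)..1, φ t := by
    have := intervalIntegral.integral_eq_sub_of_hasDerivAt
      (f := fun t : ℝ => f (x + t • v)) (f' := φ)
      (fun t _ => hg t) (hφc.intervalIntegrable 0 1)
    simp at this
    rw [this]
  have hbound : ∀ t ∈ Set.Icc (0:ℝ) 1, φ t ≤ φ 0 + M * t * ‖v‖ ^ 2 := by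
    intro t ht
    have h1 : φ t - φ 0 = inner (𝕜 := ℝ) (F (x + t • v) - F x) v := by
      simp [hφ, inner_sub_left]
    have h2 : inner (𝕜 := ℝ) (F (x + t • v) - F x) v ≤ ‖F (x + t • v) - F x‖ * ‖v‖ :=
      real_inner_le_norm _ _
    have h3 : ‖F (x + t • v) - F x‖ ≤ M * (t * ‖v‖) := by
      have := hLip (x + t • v) x
      simpa [norm_smul, abs_of_nonneg ht.1] using this
    nlinarith [norm_nonneg v, mul_le_mul_of_nonneg_right h3 (norm_nonneg v)]
  have hint : (∫ t in (0:ℝ)..1, φ t) ≤ ∫ t in (0:ℝ)..1, (φ 0 + M * t * ‖v‖ ^ 2) := by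
    apply intervalIntegral.integral_mono_on (by norm_num)
      (hφc.intervalIntegrable 0 1)
      (by apply Continuous.intervalIntegrable; continuity)
    intro t ht; exact hbound t ht
  have hval : (∫ t in (0:ℝ)..1, (φ 0 + M * t * ‖v‖ ^ 2)) = φ 0 + M / 2 * ‖v‖ ^ 2 := by
    rw [intervalIntegral.integral_add (intervalIntegrable_const) (by apply Continuous.intervalIntegrable; continuity)]
    have : (∫ t in (0:ℝ)..1, M * t * ‖v‖ ^ 2) = M / 2 * ‖v‖ ^ 2 := by
      have : (fun t : ℝ => M * t * ‖v‖ ^ 2) = fun t : ℝ => (M * ‖v‖ ^ 2) * t := by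
        funext t; ring
      rw [this, intervalIntegral.integral_const_mul, integral_id]
      ring
    rw [this]; simp
  have : φ 0 = inner (𝕜 := ℝ) (F x) v := by simp [hφ]
  linarith [hFTC, hint.trans_eq hval]

set_option maxHeartbeats 1000000 in
theorem taylor_lower {E : Type*} [NormedAddCommGroup E] [InnerProductSpace ℝ E]
    [CompleteSpace E] {f : E → ℝ} {F : E → E} {M : ℝ} (hM0 : 0 ≤ M)
    (hdiff : Differentiable ℝ f)
    (hF : ∀ y v, inner (𝕜 := ℝ) (F y) v = fderiv ℝ f y v)
    (hLip : ∀ x y, ‖F x - F y‖ ≤ M * ‖x - y‖) (x v : E) :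
    f x + inner (𝕜 := ℝ) (F x) v - M / 2 * ‖v‖ ^ 2 ≤ f (x + v) := by
  have := taylor_upper (f := fun y => -(f y)) (F := fun y => -(F y)) hM0 hdiff.neg
    (fun y v => by
      rw [fderiv_fun_neg]
      simp [inner_neg_left, hF])
    (fun a b => by
      rw [neg_sub_neg, norm_sub_rev]; exact hLip a b) x v
  simp only [inner_neg_left] at this
  linarith

set_option maxHeartbeats 1000000 in
theorem descent_step {d : ℕ} {f : EuclideanSpace ℝ (Fin d) → ℝ}
    {M α : ℝ} (hα : 0 < α) (hαM : α * M < 1) (hM0 : 0 ≤ M)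
    (hdiff : Differentiable ℝ f)
    (hLip : ∀ x y, ‖gradient f x - gradient f y‖ ≤ M * ‖x - y‖)
    (x : EuclideanSpace ℝ (Fin d)) (i : Fin d) :
    f (x - (α * gradient f x i) • EuclideanSpace.single i (1:ℝ)) ≤
      f x - α / 2 * (gradient f x i) ^ 2 := by
  set g := gradient f x with hg
  set v : EuclideanSpace ℝ (Fin d) := -((α * g i) • EuclideanSpace.single i (1:ℝ)) with hv
  have h1 : x - (α * g i) • EuclideanSpace.single i (1:ℝ) = x + v := by
    rw [hv, sub_eq_add_neg]
  have hIv : inner (𝕜 := ℝ) g v = -(α * g i * g i) := by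
    rw [hv, inner_neg_right, inner_smul_right, EuclideanSpace.inner_single_right]
    simp [mul_comm]
  have hnv : ‖v‖ ^ 2 = (α * g i) ^ 2 := by
    rw [hv, norm_neg, norm_smul, EuclideanSpace.norm_single]
    simp [mul_pow, sq_abs]
  have := taylor_upper (F := gradient f) hM0 hdiff
    (fun y v => toDual_symm_apply) hLip x v
  rw [h1]
  rw [← hg, hIv, hnv] at this
  nlinarith [sq_nonneg (g i), mul_nonneg (mul_nonneg hα.le hM0) (sq_nonneg (g i))]

set_option maxHeartbeats 1000000 in
theorem key_neg {d : ℕ} {f : EuclideanSpace ℝ (Fin d) → ℝ} {M α σ ρ : ℝ} (hd : 1 ≤ d)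
    (hα : 0 < α) (hαM : α * M < 1) (hM0 : 0 < M)
    (hdiff : Differentiable ℝ f)
    (hLip : ∀ x y, ‖gradient f x - gradient f y‖ ≤ M * ‖x - y‖)
    (hcrit : gradient f 0 = 0)
    (hσ : 0 < σ) (hρ0 : 0 < ρ) (hρ1 : ρ < 1)
    (hρ : ρ * M + M * ρ ^ 2 / 2 < (α * σ ^ 2 / (2 * d)) * (1 - ρ) ^ 2)
    {x : EuclideanSpace ℝ (Fin d)} (hx1 : σ * ‖x‖ ≤ ‖gradient f x‖)
    (hx2 : ∃ y, f y = 0 ∧ ‖x - y‖ < ρ * ‖y‖)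
    (hx3 : 0 ≤ f x)
    {i : Fin d} (hi : ∀ j, (gradient f x j) ^ 2 ≤ (gradient f x i) ^ 2) :
    f (x - (α * gradient f x i) • EuclideanSpace.single i (1:ℝ)) < 0 := by
  obtain ⟨y, hy0, hyb⟩ := hx2
  set g := gradient f x with hgdef
  set a := ‖x‖ with hadef
  set b := ‖y‖ with hbdef
  set r := ‖x - y‖ with hrdef
  have hr0 : 0 ≤ r := norm_nonneg _
  have hb : 0 < b := by
    rcases (norm_nonneg y).lt_or_eq with h | h
    · exact h
    · exfalso; nlinarith
  have hba : (1 - ρ) * b < a := by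
    have h1 : b - a ≤ r := by
      rw [hrdef, norm_sub_rev]; exact norm_sub_norm_le _ _
    nlinarith
  have ha : 0 < a := by nlinarith
  -- Taylor at x in direction y - x
  have htay := taylor_lower (F := gradient f) hM0.le hdiff
    (fun y v => toDual_symm_apply) hLip x (y - x)
  rw [add_sub_cancel] at htay
  have hgnorm : ‖g‖ ≤ M * a := by
    have := hLip x 0
    simpa [hcrit] using this
  have hinner : -(inner (𝕜 := ℝ) g (y - x)) ≤ ‖g‖ * r := by
    have h1 : inner (𝕜 := ℝ) g (x - y) ≤ ‖g‖ * ‖x - y‖ := real_inner_le_norm _ _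
    have h2 : inner (𝕜 := ℝ) g (x - y) = -(inner (𝕜 := ℝ) g (y - x)) := by
      rw [← inner_neg_right, neg_sub]
    rw [h2] at h1; exact h1
  have hfx : f x ≤ M * a * r + M / 2 * r ^ 2 := by
    have hn : ‖y - x‖ = r := by rw [hrdef, norm_sub_rev]
    rw [hy0, hn] at htay
    linarith [htay, hinner, mul_le_mul_of_nonneg_right hgnorm hr0]
  -- f x < (α σ² / 2d) a²
  have hfls : f x < α * σ ^ 2 / (2 * d) * a ^ 2 := by
    set u := r * (1 - ρ) with hudef
    have hc : (0:ℝ) < 1 - ρ := by linarith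
    have hu0 : 0 ≤ u := mul_nonneg hr0 hc.le
    have hu1 : u ≤ ρ * a := by
      have e1 : r * (1 - ρ) ≤ (ρ * b) * (1 - ρ) := mul_le_mul_of_nonneg_right hyb.le hc.le
      have e2 : ρ * ((1 - ρ) * b) ≤ ρ * a := mul_le_mul_of_nonneg_left hba.le hρ0.le
      have e3 : (ρ * b) * (1 - ρ) = ρ * ((1 - ρ) * b) := by ring
      rw [hudef]; linarith
    have hMa : 0 ≤ M * a := mul_nonneg hM0.le ha.le
    have h2 : f x * (1 - ρ) ^ 2 ≤ (ρ * M + M * ρ ^ 2 / 2) * a ^ 2 := by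
      have c1 : f x * (1 - ρ) ^ 2 ≤ (M * a * r + M / 2 * r ^ 2) * (1 - ρ) ^ 2 :=
        mul_le_mul_of_nonneg_right hfx (sq_nonneg _)
      have cid : (M * a * r + M / 2 * r ^ 2) * (1 - ρ) ^ 2
          = M * a * u * (1 - ρ) + M / 2 * u ^ 2 := by rw [hudef]; ring
      have c2 : M * a * u * (1 - ρ) ≤ M * a * u := by
        nlinarith [mul_nonneg hMa hu0]
      have c3 : M * a * u ≤ M * a * (ρ * a) := mul_le_mul_of_nonneg_left hu1 hMa
      have c4 : M / 2 * u ^ 2 ≤ M / 2 * (ρ * a) ^ 2 := by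
        have : u ^ 2 ≤ (ρ * a) ^ 2 := by nlinarith
        nlinarith [hM0.le]
      have cfin : M * a * (ρ * a) + M / 2 * (ρ * a) ^ 2
          = (ρ * M + M * ρ ^ 2 / 2) * a ^ 2 := by ring
      linarith [c1, cid ▸ c1, c2, c3, c4]
    have h3 : (ρ * M + M * ρ ^ 2 / 2) * a ^ 2 < (α * σ ^ 2 / (2 * d)) * (1 - ρ) ^ 2 * a ^ 2 :=
      (mul_lt_mul_of_pos_right hρ (by positivity))
    have h4 : 0 < (1 - ρ) ^ 2 := by positivity
    nlinarith [h2, h3, h4]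
  -- coordinate bound
  have hd0 : (0:ℝ) < d := by exact_mod_cast hd
  have hsum : ‖g‖ ^ 2 = ∑ j, (g j) ^ 2 := by
    rw [← real_inner_self_eq_norm_sq, PiLp.inner_apply]; ring_nf; simp [sq]
  have hmax : σ ^ 2 * a ^ 2 ≤ d * (g i) ^ 2 := by
    have h1 : σ ^ 2 * a ^ 2 ≤ ‖g‖ ^ 2 := by
      nlinarith [hx1, mul_nonneg hσ.le (norm_nonneg x)]
    have h2 : (∑ j, (g j) ^ 2) ≤ ((Finset.univ : Finset (Fin d)).card : ℝ) * (g i) ^ 2 := by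
      have := Finset.sum_le_card_nsmul Finset.univ (fun j => (g j) ^ 2) ((g i) ^ 2)
        (fun j _ => hi j)
      simpa [nsmul_eq_mul] using this
    simp only [Finset.card_univ, Fintype.card_fin] at h2
    calc σ ^ 2 * a ^ 2 ≤ ‖g‖ ^ 2 := h1
      _ = ∑ j, (g j) ^ 2 := hsum
      _ ≤ d * (g i) ^ 2 := h2
  have hstep := descent_step hα hαM hM0.le hdiff hLip x i
  have : α * σ ^ 2 / (2 * d) * a ^ 2 ≤ α / 2 * (g i) ^ 2 := by
    rw [div_mul_eq_mul_div, div_le_iff₀ (by positivity)]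
    nlinarith
  linarith

theorem nat_ivt {c : ℕ → ℕ} (h0 : c 0 = 0) (hstep : ∀ t, c (t + 1) ≤ c t + 1)
    {n T : ℕ} (h : n < c T) : ∃ t, c t = n ∧ n < c (t + 1) := by
  induction T with
  | zero => omega
  | succ T ih =>
    by_cases h' : n < c T
    · exact ih h'
    · exact ⟨T, by have := hstep T; omega, by omega⟩

theorem card_step {m : ℕ} {D : Type*} [Fintype D] [DecidableEq D]
    (Q : Finset (Fin m → D)) (R : (Fin m → D) → D) :
    ((Finset.univ.filter (fun q : Fin (m + 1) → D =>
        (fun k : Fin m => q k.castSucc) ∈ Q ∧ q (Fin.last m) ≠ R (fun k : Fin m => q k.castSucc))).card)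
      ≤ Q.card * (Fintype.card D - 1) := by
  classical
  set T := Finset.univ.filter (fun q : Fin (m + 1) → D =>
    (fun k : Fin m => q k.castSucc) ∈ Q ∧ q (Fin.last m) ≠ R (fun k : Fin m => q k.castSucc)) with hT
  have hmap : ∀ q ∈ T, (fun k : Fin m => q k.castSucc) ∈ Q := by
    intro q hq; rw [hT, Finset.mem_filter] at hq; exact hq.2.1
  rw [Finset.card_eq_sum_card_fiberwise hmap]
  have hfib : ∀ p ∈ Q, (T.filter (fun q => (fun k : Fin m => q k.castSucc) = p)).card
      ≤ Fintype.card D - 1 := by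
    intro p hp
    have hinj : Set.InjOn (fun q : Fin (m + 1) → D => q (Fin.last m))
        ((T.filter (fun q => (fun k : Fin m => q k.castSucc) = p)) : Set (Fin (m + 1) → D)) := by
      intro q hq q' hq' hqq
      simp only [Finset.coe_filter, Set.mem_setOf_eq] at hq hq'
      funext k
      induction k using Fin.lastCases with
      | last => exact hqq
      | cast k => exact (congrFun hq.2 k).trans (congrFun hq'.2 k).symm
    have hsub : ∀ q ∈ T.filter (fun q => (fun k : Fin m => q k.castSucc) = p),
        q (Fin.last m) ∈ Finset.univ.erase (R p) := by
      intro q hq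
      rw [Finset.mem_filter] at hq
      obtain ⟨hqT, hqp⟩ := hq
      rw [hT, Finset.mem_filter] at hqT
      refine Finset.mem_erase.2 ⟨?_, Finset.mem_univ _⟩
      rw [← hqp]; exact hqT.2.2
    calc (T.filter (fun q => (fun k : Fin m => q k.castSucc) = p)).card
        ≤ (Finset.univ.erase (R p)).card := Finset.card_le_card_of_injOn _ hsub hinj
      _ = Fintype.card D - 1 := by
          rw [Finset.card_erase_of_mem (Finset.mem_univ _), Finset.card_univ]
    
  calc (∑ p ∈ Q, (T.filter (fun q => (fun k : Fin m => q k.castSucc) = p)).card)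
      ≤ ∑ p ∈ Q, (Fintype.card D - 1) := Finset.sum_le_sum hfib
    _ = Q.card * (Fintype.card D - 1) := by rw [Finset.sum_const, smul_eq_mul]

theorem rcgdIter_congr {d : ℕ} (f : EuclideanSpace ℝ (Fin d) → ℝ) (α : ℝ)
    (x₀ : EuclideanSpace ℝ (Fin d)) {ω ω' : ℕ → Fin d} :
    ∀ {t : ℕ}, (∀ s, s < t → ω s = ω' s) → rcgdIter d f α x₀ ω t = rcgdIter d f α x₀ ω' t
  | 0, _ => rfl
  | t + 1, h => by
    have ih := rcgdIter_congr f α x₀ (ω := ω) (ω' := ω') (t := t)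
      (fun s hs => h s (hs.trans (Nat.lt_succ_self t)))
    show rcgdIter d f α x₀ ω t -
        (α * gradient f (rcgdIter d f α x₀ ω t) (ω t)) • EuclideanSpace.single (ω t) (1 : ℝ) = _
    rw [ih, h t (Nat.lt_succ_self t)]
    rfl

set_option maxHeartbeats 1000000 in
theorem slice_zero {d : ℕ} (hd : 1 ≤ d) (f : EuclideanSpace ℝ (Fin d) → ℝ) (α : ℝ)
    (x₀ : EuclideanSpace ℝ (Fin d)) (S' : Set (EuclideanSpace ℝ (Fin d)))
    (good : EuclideanSpace ℝ (Fin d) → Fin d)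
    (hL1 : ∀ (ω : ℕ → Fin d) (t : ℕ), rcgdIter d f α x₀ ω t ∈ S' →
      ω t = good (rcgdIter d f α x₀ ω t) → ∀ s, t < s → rcgdIter d f α x₀ ω s ∉ S')
    (ℙ : Measure (ℕ → Fin d))
    (hℙ : ∀ (n : ℕ) (js : Fin n → Fin d),
      ℙ {ω | ∀ k : Fin n, ω (k : ℕ) = js k} = (1 / (d : ENNReal)) ^ n) :
    ℙ {ω | {t : ℕ | rcgdIter d f α x₀ ω t ∈ S'}.Infinite} = 0 := by
  classical
  set ε : ENNReal := 1 / (d : ENNReal) with hε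
  set X : ℕ → (ℕ → Fin d) → EuclideanSpace ℝ (Fin d) := fun t ω => rcgdIter d f α x₀ ω t with hX
  set cnt : (ℕ → Fin d) → ℕ → ℕ :=
    fun ω t => ((Finset.range t).filter fun s => X s ω ∈ S').card with hcnt
  -- basic counting facts
  have hcnt0 : ∀ ω, cnt ω 0 = 0 := fun ω => by simp [hcnt]
  have hcntstep : ∀ ω t, cnt ω (t + 1) = cnt ω t + (if X t ω ∈ S' then 1 else 0) := by
    intro ω t
    rw [hcnt]
    simp only [Finset.range_add_one, Finset.filter_insert]
    split
    · rw [Finset.card_insert_of_notMem (by simp)]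
    · simp
  have hcntmono : ∀ ω s t, s ≤ t → cnt ω s ≤ cnt ω t := by
    intro ω s t hst
    exact Finset.card_le_card (Finset.filter_subset_filter _
      (Finset.range_subset_range.2 hst))
  -- prefix machinery
  set π : (n : ℕ) → (ℕ → Fin d) → (Fin n → Fin d) := fun n ω k => ω (k : ℕ) with hπ
  set ext : (n : ℕ) → (Fin n → Fin d) → (ℕ → Fin d) :=
    fun n p s => if h : s < n then p ⟨s, h⟩ else ⟨0, hd⟩ with hextdef
  have hext : ∀ (n : ℕ) (ω : ℕ → Fin d) (s : ℕ), s < n → ext n (π n ω) s = ω s := by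
    intro n ω s hs; simp [hextdef, hπ, dif_pos hs]
  have hXdep : ∀ (t s : ℕ), s ≤ t → ∀ ω, X s (ext t (π t ω)) = X s ω := by
    intro t s hs ω
    exact rcgdIter_congr f α x₀ (fun u hu => hext t ω u (lt_of_lt_of_le hu hs))
  have hcntdep : ∀ (t : ℕ) (ω : ℕ → Fin d), cnt (ext t (π t ω)) t = cnt ω t := by
    intro t ω
    simp only [hcnt]
    exact congrArg Finset.card (Finset.filter_congr fun s hs => by
      rw [hXdep t s (Nat.le_of_lt (Finset.mem_range.1 hs)) ω])
  -- cylinder events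
  have cylMeas : ∀ (n : ℕ) (P : Set (Fin n → Fin d)), MeasurableSet {ω | π n ω ∈ P} := by
    intro n P
    have : {ω | π n ω ∈ P} = (π n) ⁻¹' P := rfl
    rw [this]
    exact (measurable_pi_lambda _ fun k => measurable_pi_apply _) P.toFinite.measurableSet
  have cylM : ∀ (n : ℕ) (P : Finset (Fin n → Fin d)),
      ℙ {ω | π n ω ∈ P} = P.card * ε ^ n := by
    intro n P
    have hun : {ω | π n ω ∈ P} = ⋃ p ∈ P, {ω | ∀ k : Fin n, ω (k : ℕ) = p k} := by
      ext ω
      simp only [Set.mem_setOf_eq, Set.mem_iUnion]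
      constructor
      · intro h; exact ⟨π n ω, h, fun k => rfl⟩
      · rintro ⟨p, hp, hωp⟩
        have : π n ω = p := funext fun k => hωp k
        rw [this]; exact hp
    rw [hun, measure_biUnion_finset ?_ ?_]
    · rw [Finset.sum_congr rfl (fun p _ => hℙ n p), Finset.sum_const, nsmul_eq_mul, hε]
    · intro p hp q hq hpq
      rw [Function.onFun, Set.disjoint_left]
      intro ω hωp hωq
      exact hpq (funext fun k => (hωp k).symm.trans (hωq k))
    · intro p hp
      have : {ω : ℕ → Fin d | ∀ k : Fin n, ω (k : ℕ) = p k} = ⋂ k : Fin n, {ω | ω (k : ℕ) = p k} := by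
        ext ω; simp
      rw [this]
      refine MeasurableSet.iInter fun k => ?_
      have h2 : {ω : ℕ → Fin d | ω (k : ℕ) = p k}
          = (fun ω : ℕ → Fin d => ω (k : ℕ)) ⁻¹' {p k} := by ext; simp
      rw [h2]
      exact (measurable_pi_apply (k : ℕ)) (measurableSet_singleton (p k))
  -- prefix event finsets
  set PE : (n t : ℕ) → Finset (Fin t → Fin d) := fun n t =>
    Finset.univ.filter (fun p => cnt (ext t p) t = n ∧ X t (ext t p) ∈ S') with hPE
  set PB : (n t : ℕ) → Finset (Fin (t + 1) → Fin d) := fun n t =>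
    Finset.univ.filter (fun q : Fin (t + 1) → Fin d =>
      (fun k : Fin t => q k.castSucc) ∈ PE n t ∧
        q (Fin.last t) ≠ (fun p => good (X t (ext t p))) (fun k : Fin t => q k.castSucc)) with hPB
  set Ev : ℕ → ℕ → Set (ℕ → Fin d) := fun n t => {ω | cnt ω t = n ∧ X t ω ∈ S'} with hEv
  set Bv : ℕ → ℕ → Set (ℕ → Fin d) := fun n t =>
    {ω | (cnt ω t = n ∧ X t ω ∈ S') ∧ ω t ≠ good (X t ω)} with hBv
  have hEeq : ∀ n t, Ev n t = {ω | π t ω ∈ PE n t} := by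
    intro n t
    ext ω
    simp only [hEv, hPE, Set.mem_setOf_eq, Finset.mem_filter, Finset.mem_univ, true_and]
    rw [hcntdep t ω, hXdep t t le_rfl ω]
  have hBeq : ∀ n t, Bv n t = {ω | π (t + 1) ω ∈ PB n t} := by
    intro n t
    ext ω
    have e1 : (fun k : Fin t => π (t + 1) ω k.castSucc) = π t ω := by
      funext k; simp [hπ]
    have e2 : π (t + 1) ω (Fin.last t) = ω t := by simp [hπ]
    simp only [hBv, hPB, Set.mem_setOf_eq, Finset.mem_filter, Finset.mem_univ, true_and,
      e1, e2]
    have hEiff : (cnt ω t = n ∧ X t ω ∈ S') ↔ π t ω ∈ PE n t := by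
      have h := Set.ext_iff.mp (hEeq n t) ω
      simpa [hEv] using h
    rw [hXdep t t le_rfl ω]
    exact and_congr hEiff Iff.rfl
  have hEmeas : ∀ n t, MeasurableSet (Ev n t) := fun n t => (hEeq n t) ▸ cylMeas t _
  have hEP : ∀ n t, ℙ (Ev n t) = (PE n t).card * ε ^ t := by
    intro n t; rw [hEeq n t, cylM t (PE n t)]
  set rr : ENNReal := ((d - 1 : ℕ) : ENNReal) * ε with hrr
  have hBP : ∀ n t, ℙ (Bv n t) ≤ rr * ℙ (Ev n t) := by
    intro n t
    rw [hBeq n t, cylM (t + 1) (PB n t), hEP n t]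
    have hcard : (PB n t).card ≤ (PE n t).card * (d - 1) := by
      have h := card_step (PE n t) (fun p => good (X t (ext t p)))
      simpa [Fintype.card_fin, hPB] using h
    calc ((PB n t).card : ENNReal) * ε ^ (t + 1)
        ≤ (((PE n t).card * (d - 1) : ℕ) : ENNReal) * ε ^ (t + 1) :=
          by gcongr
      _ = rr * ((PE n t).card * ε ^ t) := by push_cast [hrr, pow_succ]; ring
  have hstep' : ∀ ω t, cnt ω (t + 1) ≤ cnt ω t + 1 := fun ω t => by
    rw [hcntstep]; split <;> omega
  have hvisit : ∀ ω t n, cnt ω t = n → n < cnt ω (t + 1) → X t ω ∈ S' := by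
    intro ω t n h1 h2
    by_contra hc
    rw [hcntstep, if_neg hc] at h2
    omega
  have hAE : ∀ n, {ω | ∃ T, n + 1 ≤ cnt ω T} = ⋃ t, Ev n t := by
    intro n
    ext ω
    constructor
    · rintro ⟨T, hT⟩
      obtain ⟨t, ht1, ht2⟩ := nat_ivt (hcnt0 ω) (hstep' ω) (show n < cnt ω T by omega)
      exact Set.mem_iUnion.2 ⟨t, ht1, hvisit ω t n ht1 ht2⟩
    · intro hmem
      obtain ⟨t, ht⟩ := Set.mem_iUnion.1 hmem
      exact ⟨t + 1, by rw [hcntstep, ht.1, if_pos ht.2]⟩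
  have hdisj : ∀ n, Pairwise (Function.onFun Disjoint (Ev n)) := by
    intro n t t' htt'
    rw [Function.onFun, Set.disjoint_left]
    rintro ω ⟨ha1, ha2⟩ ⟨hb1, hb2⟩
    rcases lt_or_gt_of_ne htt' with h | h
    · have hm := hcntmono ω (t + 1) t' h
      rw [hcntstep, if_pos ha2, ha1] at hm
      omega
    · have hm := hcntmono ω (t' + 1) t h
      rw [hcntstep, if_pos hb2, hb1] at hm
      omega
  have hPuniv : ℙ Set.univ = 1 := by
    have h := hℙ 0 (fun k => k.elim0)
    have he : {ω : ℕ → Fin d | ∀ k : Fin 0, ω (k : ℕ) = k.elim0} = Set.univ := by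
      ext ω; simp
    rw [he] at h
    simpa using h
  have hbound : ∀ n, ℙ {ω | ∃ T, n + 1 ≤ cnt ω T} ≤ rr ^ n := by
    intro n
    induction n with
    | zero =>
      simpa using le_trans (measure_mono (Set.subset_univ _)) (le_of_eq hPuniv)
    | succ n ih =>
      have hcont : {ω | ∃ T, n + 2 ≤ cnt ω T} ⊆ ⋃ t, Bv n t := by
        rintro ω ⟨T, hT⟩
        obtain ⟨t, ht1, ht2⟩ := nat_ivt (hcnt0 ω) (hstep' ω) (show n < cnt ω T by omega)
        obtain ⟨t', ht1', ht2'⟩ := nat_ivt (hcnt0 ω) (hstep' ω) (show n + 1 < cnt ω T by omega)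
        have hXt : X t ω ∈ S' := hvisit ω t n ht1 ht2
        have hXt' : X t' ω ∈ S' := hvisit ω t' (n + 1) ht1' ht2'
        have htt' : t < t' := by
          rcases lt_trichotomy t t' with h | h | h
          · exact h
          · subst h; omega
          · exfalso
            have := hcntmono ω (t' + 1) t h
            rw [hcntstep, if_pos hXt', ht1'] at this
            omega
        refine Set.mem_iUnion.2 ⟨t, ⟨ht1, hXt⟩, ?_⟩
        intro heq
        exact hL1 ω t hXt heq t' htt' hXt'
      calc ℙ {ω | ∃ T, n + 1 + 1 ≤ cnt ω T} ≤ ℙ (⋃ t, Bv n t) := by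
            refine measure_mono ?_
            intro ω hω
            exact hcont hω
        _ ≤ ∑' t, ℙ (Bv n t) := measure_iUnion_le _
        _ ≤ ∑' t, (rr * ℙ (Ev n t)) := ENNReal.tsum_le_tsum fun t => hBP n t
        _ = rr * ∑' t, ℙ (Ev n t) := ENNReal.tsum_mul_left
        _ = rr * ℙ (⋃ t, Ev n t) := by rw [measure_iUnion (hdisj n) (hEmeas n)]
        _ = rr * ℙ {ω | ∃ T, n + 1 ≤ cnt ω T} := by rw [hAE n]
        _ ≤ rr * rr ^ n := by gcongr
        _ = rr ^ (n + 1) := (pow_succ' rr n).symm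
  have hItoA : ∀ n, {ω | {t : ℕ | rcgdIter d f α x₀ ω t ∈ S'}.Infinite}
      ⊆ {ω | ∃ T, n + 1 ≤ cnt ω T} := by
    intro n ω hω
    suffices h : ∀ m, ∃ T, m ≤ cnt ω T from h (n + 1)
    intro m
    induction m with
    | zero => exact ⟨0, Nat.zero_le _⟩
    | succ m ih =>
      obtain ⟨T, hT⟩ := ih
      obtain ⟨b, hb, hTb⟩ := Set.Infinite.exists_gt hω T
      refine ⟨b + 1, ?_⟩
      have h1 : cnt ω (b + 1) = cnt ω b + 1 := by
        rw [hcntstep, if_pos (by exact hb)]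
      have h2 : cnt ω T ≤ cnt ω b := hcntmono ω T b (le_of_lt hTb)
      omega
  have hd0 : (d : ENNReal) ≠ 0 := by
    simp only [ne_eq, Nat.cast_eq_zero]
    omega
  have hrrlt : rr < 1 := by
    rw [hrr, hε, one_div, ← div_eq_mul_inv]
    rw [ENNReal.div_lt_iff (Or.inl hd0) (Or.inl (ENNReal.natCast_ne_top d))]
    rw [one_mul]
    exact_mod_cast Nat.sub_lt (by omega) one_pos
  have hle : ∀ n, ℙ {ω | {t : ℕ | rcgdIter d f α x₀ ω t ∈ S'}.Infinite} ≤ rr ^ n :=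
    fun n => (measure_mono (hItoA n)).trans (hbound n)
  exact le_antisymm
    (ge_of_tendsto' (ENNReal.tendsto_pow_atTop_nhds_zero_of_lt_one hrrlt) hle)
    (by simp)

set_option maxHeartbeats 1000000 in
/-- For `μ = Leb × ℙ` almost every `(x₀, ω)`, the iterates visit the trap region
`S = U₁ ∩ U₂ ∩ f⁻¹([0,∞))` only finitely often, where
`U₂ = ⋃_{f(x) = 0} B(x, ρ‖x‖)`. -/
theorem rcgd_visits_trap_finitely_often
    {d : ℕ} (hd : 1 ≤ d) (f : EuclideanSpace ℝ (Fin d) → ℝ) (M α : ℝ)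
    (hf : ContDiff ℝ 2 f)
    (hM : ∀ x, ‖hess d f x‖ ≤ M)
    (hα : 0 < α) (hα' : α < 1 / M)
    (hcrit : gradient f 0 = 0) (hf0 : f 0 = 0)
    (hneg : ∃ μ < (0 : ℝ), Module.End.HasEigenvalue (hess d f 0).toLinearMap μ)
    (hnd : ∀ μ : ℝ, Module.End.HasEigenvalue (hess d f 0).toLinearMap μ → μ ≠ 0)
    (U₁ : Set (EuclideanSpace ℝ (Fin d))) (hU₁ : U₁ ∈ 𝓝 (0 : EuclideanSpace ℝ (Fin d)))
    (σ : ℝ) (hσ : 0 < σ)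
    (hgrad : ∀ x ∈ U₁, σ * ‖x‖ ≤ ‖gradient f x‖)
    (ρ : ℝ) (hρ0 : 0 < ρ) (hρ1 : ρ < 1)
    (hρ : ρ * M + M * ρ ^ 2 / 2 < (α * σ ^ 2 / (2 * d)) * (1 - ρ) ^ 2)
    (S : Set (EuclideanSpace ℝ (Fin d)))
    (hS : S = U₁ ∩ (⋃ x ∈ {x : EuclideanSpace ℝ (Fin d) | f x = 0}, Metric.ball x (ρ * ‖x‖)) ∩
      f ⁻¹' Set.Ici (0 : ℝ))
    (ℙ : Measure (ℕ → Fin d))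
    (hℙ : ∀ (n : ℕ) (js : Fin n → Fin d),
      ℙ {ω | ∀ k : Fin n, ω (k : ℕ) = js k} = (1 / (d : ENNReal)) ^ n) :
    ((volume : Measure (EuclideanSpace ℝ (Fin d))).prod ℙ)
      {p : EuclideanSpace ℝ (Fin d) × (ℕ → Fin d) |
        ¬ {t : ℕ | rcgdIter d f α p.1 p.2 t ∈ S}.Finite} = 0 := by
  classical
  have hM0 : 0 < M := by
    by_contra hc
    push_neg at hc
    have h1 : (1:ℝ) / M ≤ 0 := by
      rcases hc.lt_or_eq with h | h
      · exact le_of_lt (div_neg_of_pos_of_neg one_pos h)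
      · rw [h]; simp
    linarith
  have hαM : α * M < 1 := (lt_div_iff₀ hM0).mp hα'
  have hdiff : Differentiable ℝ f := hf.differentiable (by norm_num)
  have hgrad1 : ContDiff ℝ 1 (gradient f) := by
    have h1 : ContDiff ℝ 1 (fderiv ℝ f) := hf.fderiv_right (by norm_num)
    have h2 : gradient f = fun x =>
        (InnerProductSpace.toDual ℝ (EuclideanSpace ℝ (Fin d))).symm (fderiv ℝ f x) := rfl
    rw [h2]
    exact ((InnerProductSpace.toDual ℝ
      (EuclideanSpace ℝ (Fin d))).symm.toContinuousLinearEquiv.contDiff).comp h1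
  have hLip : ∀ x y, ‖gradient f x - gradient f y‖ ≤ M * ‖x - y‖ := by
    intro x y
    have h := Convex.norm_image_sub_le_of_norm_fderiv_le (f := gradient f)
      (fun z _ => (hgrad1.differentiable one_ne_zero).differentiableAt)
      (fun z _ => hM z) convex_univ (Set.mem_univ y) (Set.mem_univ x)
    simpa using h
  set U₂ : Set (EuclideanSpace ℝ (Fin d)) :=
    ⋃ y ∈ {x : EuclideanSpace ℝ (Fin d) | f x = 0}, Metric.ball y (ρ * ‖y‖) with hU₂
  set S' : Set (EuclideanSpace ℝ (Fin d)) :=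
    ({x | σ * ‖x‖ ≤ ‖gradient f x‖} ∩ U₂) ∩ f ⁻¹' Set.Ici 0 with hS'def
  have hSS' : S ⊆ S' := by
    rw [hS]
    rintro x ⟨⟨hx1, hx2⟩, hx3⟩
    exact ⟨⟨hgrad x hx1, hx2⟩, hx3⟩
  have hS'meas : MeasurableSet S' := by
    refine (MeasurableSet.inter (MeasurableSet.inter ?_ ?_) ?_)
    · exact (isClosed_le (continuous_const.mul continuous_norm)
        hgrad1.continuous.norm).measurableSet
    · exact (isOpen_iUnion fun y => isOpen_iUnion fun _ => Metric.isOpen_ball).measurableSet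
    · exact hf.continuous.measurable measurableSet_Ici
  have hex : ∀ x : EuclideanSpace ℝ (Fin d), ∃ i : Fin d,
      ∀ j, (gradient f x j) ^ 2 ≤ (gradient f x i) ^ 2 := by
    intro x
    obtain ⟨i, -, hi⟩ := Finset.exists_max_image (Finset.univ : Finset (Fin d))
      (fun j => (gradient f x j) ^ 2) ⟨⟨0, hd⟩, Finset.mem_univ _⟩
    exact ⟨i, fun j => hi j (Finset.mem_univ j)⟩
  choose good hgood using hex
  have hmono : ∀ x i, f (x - (α * gradient f x i) • EuclideanSpace.single i (1:ℝ)) ≤ f x := by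
    intro x i
    have h := descent_step hα hαM hM0.le hdiff hLip x i
    have h2 : 0 ≤ α / 2 * (gradient f x i) ^ 2 := by positivity
    linarith
  have hkey : ∀ x ∈ S',
      f (x - (α * gradient f x (good x)) • EuclideanSpace.single (good x) (1:ℝ)) < 0 := by
    rintro x ⟨⟨hx1, hx2⟩, hx3⟩
    obtain ⟨y, hy⟩ : ∃ y, f y = 0 ∧ ‖x - y‖ < ρ * ‖y‖ := by
      rw [hU₂] at hx2
      simp only [Set.mem_iUnion, Metric.mem_ball, Set.mem_setOf_eq] at hx2
      obtain ⟨y, hy0, hyd⟩ := hx2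
      exact ⟨y, hy0, by rwa [dist_eq_norm] at hyd⟩
    exact key_neg hd hα hαM hM0 hdiff hLip hcrit hσ hρ0 hρ1 hρ hx1 ⟨y, hy⟩ hx3 (hgood x)
  have hL1 : ∀ (x₀ : EuclideanSpace ℝ (Fin d)) (ω : ℕ → Fin d) (t : ℕ),
      rcgdIter d f α x₀ ω t ∈ S' →
      ω t = good (rcgdIter d f α x₀ ω t) → ∀ s, t < s → rcgdIter d f α x₀ ω s ∉ S' := by
    intro x₀ ω t hmem heq s hts hmem'
    have hneg1 : f (rcgdIter d f α x₀ ω (t + 1)) < 0 := by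
      have he : rcgdIter d f α x₀ ω (t + 1)
          = rcgdIter d f α x₀ ω t - (α * gradient f (rcgdIter d f α x₀ ω t) (ω t)) •
              EuclideanSpace.single (ω t) (1:ℝ) := rfl
      rw [he, heq]
      exact hkey _ hmem
    have hmono' : ∀ u, t + 1 ≤ u → f (rcgdIter d f α x₀ ω u) ≤ f (rcgdIter d f α x₀ ω (t + 1)) := by
      intro u hu
      induction u, hu using Nat.le_induction with
      | base => exact le_rfl
      | succ u hu ih =>
        have he : rcgdIter d f α x₀ ω (u + 1)
            = rcgdIter d f α x₀ ω u - (α * gradient f (rcgdIter d f α x₀ ω u) (ω u)) •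
                EuclideanSpace.single (ω u) (1:ℝ) := rfl
        rw [he]
        exact le_trans (hmono _ _) ih
    have h0 : (0:ℝ) ≤ f (rcgdIter d f α x₀ ω s) := hmem'.2
    have hms := hmono' s hts
    linarith
  have hslice : ∀ x₀, ℙ {ω | {t : ℕ | rcgdIter d f α x₀ ω t ∈ S'}.Infinite} = 0 :=
    fun x₀ => slice_zero hd f α x₀ S' good (hL1 x₀) ℙ hℙ
  have hgc : Continuous (gradient f) := hgrad1.continuous
  have hXmeas : ∀ t : ℕ, Measurable (fun p : EuclideanSpace ℝ (Fin d) × (ℕ → Fin d) =>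
      rcgdIter d f α p.1 p.2 t) := by
    intro t
    induction t with
    | zero => exact measurable_fst
    | succ t ih =>
      have hev : Measurable (fun p : EuclideanSpace ℝ (Fin d) × (ℕ → Fin d) =>
          gradient f (rcgdIter d f α p.1 p.2 t) (p.2 t)) := by
        have h1 : Measurable (fun q : EuclideanSpace ℝ (Fin d) × Fin d => gradient f q.1 q.2) :=
          measurable_from_prod_countable_left fun i => ((PiLp.continuous_apply 2 (fun _ : Fin d => ℝ) i).comp hgc).measurable
        exact h1.comp (ih.prodMk ((measurable_pi_apply t).comp measurable_snd))
      have hsingle : Measurable (fun p : EuclideanSpace ℝ (Fin d) × (ℕ → Fin d) =>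
          EuclideanSpace.single (p.2 t) (1:ℝ)) := by
        have h1 : Measurable (fun i : Fin d => EuclideanSpace.single i (1:ℝ)) :=
          measurable_of_countable _
        exact h1.comp ((measurable_pi_apply t).comp measurable_snd)
      have he : (fun p : EuclideanSpace ℝ (Fin d) × (ℕ → Fin d) =>
            rcgdIter d f α p.1 p.2 (t + 1))
          = fun p => rcgdIter d f α p.1 p.2 t -
              (α * gradient f (rcgdIter d f α p.1 p.2 t) (p.2 t)) •
                EuclideanSpace.single (p.2 t) (1:ℝ) := rfl
      rw [he]
      exact ih.sub ((measurable_const.mul hev).smul hsingle)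
  have hPuniv : ℙ Set.univ = 1 := by
    have h := hℙ 0 (fun k => k.elim0)
    have he : {ω : ℕ → Fin d | ∀ k : Fin 0, ω (k : ℕ) = k.elim0} = Set.univ := by
      ext ω; simp
    rw [he] at h
    simpa using h
  haveI : IsFiniteMeasure ℙ := ⟨by rw [hPuniv]; exact ENNReal.one_lt_top⟩
  set B' : Set (EuclideanSpace ℝ (Fin d) × (ℕ → Fin d)) :=
    {p | {t : ℕ | rcgdIter d f α p.1 p.2 t ∈ S'}.Infinite} with hB'
  have hB'meas : MeasurableSet B' := by
    have he : B' = ⋂ N, ⋃ t, ⋃ (_ : N ≤ t),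
        {p : EuclideanSpace ℝ (Fin d) × (ℕ → Fin d) | rcgdIter d f α p.1 p.2 t ∈ S'} := by
      ext p
      simp only [hB', Set.mem_setOf_eq, Set.mem_iInter, Set.mem_iUnion]
      rw [← Nat.frequently_atTop_iff_infinite, Filter.frequently_atTop]
      constructor
      · intro h N; obtain ⟨t, ht1, ht2⟩ := h N; exact ⟨t, ht1, ht2⟩
      · intro h N; obtain ⟨t, ht1, ht2⟩ := h N; exact ⟨t, ht1, ht2⟩
    rw [he]
    exact MeasurableSet.iInter fun N => MeasurableSet.iUnion fun t =>
      MeasurableSet.iUnion fun _ => (hXmeas t) hS'meas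
  have hfin : ((volume : Measure (EuclideanSpace ℝ (Fin d))).prod ℙ) B' = 0 := by
    rw [Measure.prod_apply hB'meas]
    have hz : ∀ x₀ : EuclideanSpace ℝ (Fin d), ℙ (Prod.mk x₀ ⁻¹' B') = 0 := by
      intro x₀
      have he : Prod.mk x₀ ⁻¹' B'
          = {ω | {t : ℕ | rcgdIter d f α x₀ ω t ∈ S'}.Infinite} := rfl
      rw [he]
      exact hslice x₀
    simp only [hz, lintegral_zero]
  refine measure_mono_null ?_ hfin
  intro p hp
  simp only [Set.mem_setOf_eq] at hp ⊢
  exact Set.Infinite.mono (fun t ht => hSS' ht) hp
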